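/- Let ν ∈ ℝ, z₀ ∈ ℝ, and suppose g : [z₀,∞) → ℝ is C¹ with g(z₀) = -2πν and g integrable appropriately. Define χ(z) = (1/(2πi)) ∫_{z₀}^∞ log₀(z-ζ) dg(ζ) where log₀ is the logarithm with branch cut along arg = 0. Then there is a constant C such that for z approaching z₀ nontangentially to [z₀,∞), |χ(z) − χ(z₀)| ≤ C|z−z₀|(1 + |ln|z−z₀||). -/

import Mathlib

set_option maxHeartbeats 2000000

open MeasureTheory

noncomputable def Gfun : ℂ → ℂ := fun w =>
  (Real.log (‖w‖) : ℂ) + Complex.I *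
    ((if 0 < Complex.arg w then Complex.arg w else Complex.arg w + 2 * Real.pi : ℝ) : ℂ)

lemma Gfun_meas : Measurable Gfun := by
  apply Measurable.add
  · exact Complex.measurable_ofReal.comp (Real.measurable_log.comp continuous_norm.measurable)
  · refine measurable_const.mul (Complex.measurable_ofReal.comp ?_)
    exact Measurable.ite (measurableSet_lt measurable_const Complex.measurable_arg)
      Complex.measurable_arg (Complex.measurable_arg.add_const _)

lemma theta_abs_le (w : ℂ) :
    |(if 0 < Complex.arg w then Complex.arg w else Complex.arg w + 2 * Real.pi : ℝ)| ≤
      2 * Real.pi := by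
  have h1 := Complex.arg_le_pi w
  have h2 := Complex.neg_pi_lt_arg w
  have hπ := Real.pi_pos
  split_ifs with h
  · rw [abs_le]; constructor <;> nlinarith
  · rw [abs_le]; constructor <;> nlinarith

lemma Gfun_norm_le (w : ℂ) :
    ‖Gfun w‖ ≤ |Real.log (‖w‖)| + 2 * Real.pi := by
  refine (norm_add_le _ _).trans ?_
  rw [Complex.norm_real, norm_mul, Complex.norm_I, one_mul, Complex.norm_real]
  exact add_le_add le_rfl (theta_abs_le w)

lemma Gfun_neg_real {x : ℝ} (hx : x < 0) :
    Gfun (x : ℂ) = (Real.log (-x) : ℂ) + Complex.I * (Real.pi : ℂ) := by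
  have h1 : Complex.arg (x : ℂ) = Real.pi := Complex.arg_ofReal_of_neg hx
  have h2 : ‖(x : ℂ)‖ = -x := by
    rw [Complex.norm_real, Real.norm_eq_abs, abs_of_neg hx]
  simp [Gfun, h1, h2, Real.pi_pos]

lemma abs_log_le {u x v : ℝ} (hu : 0 < u) (hux : u ≤ x) (hxv : x ≤ v) :
    |Real.log x| ≤ |Real.log u| + |Real.log v| := by
  have h1 : Real.log u ≤ Real.log x := Real.log_le_log hu hux
  have h2 : Real.log x ≤ Real.log v := Real.log_le_log (hu.trans_le hux) hxv
  rw [abs_le]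
  constructor
  · have := neg_abs_le (Real.log u); have := abs_nonneg (Real.log v); linarith
  · have := le_abs_self (Real.log v); have := abs_nonneg (Real.log u); linarith

lemma abs_log_le_rpow {a t : ℝ} (ht : 0 < t) (hta : t ≤ a) :
    |Real.log t| ≤ |Real.log a| + 2 * a ^ ((1:ℝ)/2) * t ^ (-(1:ℝ)/2) := by
  have ha : 0 < a := ht.trans_le hta
  have hr : (1:ℝ) ≤ a / t := (one_le_div ht).mpr hta
  have hr0 : 0 < a / t := div_pos ha ht
  have hlog : Real.log (a / t) ≤ 2 * a ^ ((1:ℝ)/2) * t ^ (-(1:ℝ)/2) := by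
    have h1 : Real.log ((a / t) ^ ((1:ℝ)/2)) = (1/2) * Real.log (a / t) :=
      Real.log_rpow hr0 _
    have h2 : Real.log ((a / t) ^ ((1:ℝ)/2)) ≤ (a / t) ^ ((1:ℝ)/2) - 1 :=
      Real.log_le_sub_one_of_pos (Real.rpow_pos_of_pos hr0 _)
    have h3 : (a / t) ^ ((1:ℝ)/2) = a ^ ((1:ℝ)/2) * t ^ (-(1:ℝ)/2) := by
      rw [Real.div_rpow ha.le ht.le, div_eq_mul_inv, ← Real.rpow_neg ht.le]
      norm_num
    nlinarith [Real.rpow_pos_of_pos hr0 ((1:ℝ)/2)]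
  have hd : Real.log (a/t) = Real.log a - Real.log t := Real.log_div (ne_of_gt ha) (ne_of_gt ht)
  have h1 : Real.log t ≤ Real.log a := Real.log_le_log ht hta
  have h2 : 0 ≤ Real.log (a/t) := Real.log_nonneg hr
  rw [abs_le]
  constructor
  · have := neg_abs_le (Real.log a); linarith
  · have := le_abs_self (Real.log a)
    have : 0 ≤ 2 * a ^ ((1:ℝ)/2) * t ^ (-(1:ℝ)/2) := by positivity
    linarith

lemma abs_arg_le {w : ℂ} (hw : 0 < w.re) : |Complex.arg w| ≤ |w.im| / w.re := by
  have hlt : |Complex.arg w| < Real.pi / 2 :=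
    Complex.abs_arg_lt_pi_div_two_iff.mpr (Or.inl hw)
  have htan : Real.tan (Complex.arg w) = w.im / w.re := Complex.tan_arg w
  rcases le_or_gt 0 (Complex.arg w) with h | h
  · have him : 0 ≤ w.im := Complex.arg_nonneg_iff.mp h
    have : Complex.arg w ≤ Real.tan (Complex.arg w) :=
      Real.le_tan h (lt_of_abs_lt hlt)
    rw [abs_of_nonneg h, abs_of_nonneg him]
    exact this.trans_eq htan
  · have him : w.im < 0 := Complex.arg_neg_iff.mp h
    have h2 : -Complex.arg w < Real.pi / 2 := by
      rw [abs_of_neg h] at hlt; exact hlt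
    have : -Complex.arg w ≤ Real.tan (-Complex.arg w) :=
      Real.le_tan (by linarith) h2
    rw [Real.tan_neg, htan] at this
    rw [abs_of_neg h, abs_of_neg him]
    calc -Complex.arg w ≤ -(w.im / w.re) := this
      _ = -w.im / w.re := by ring

lemma far_bound (z : ℂ) (z₀ ζ : ℝ)
    (hd2 : 2 * ‖z - (z₀ : ℂ)‖ < ζ - z₀)
    (him0 : z.im = 0 → z.re < z₀) :
    ‖Gfun (z - (ζ : ℂ)) - Gfun ((z₀ : ℂ) - (ζ : ℂ))‖ ≤
      4 * ‖z - (z₀ : ℂ)‖ / (ζ - z₀) := by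
  set δ := ‖z - (z₀ : ℂ)‖ with hδ
  set t := ζ - z₀ with htdef
  have hδ0 : 0 ≤ δ := norm_nonneg _
  have ht : 0 < t := lt_of_le_of_lt (by positivity) hd2
  have hζ : z₀ < ζ := by linarith
  have hre : |z.re - z₀| ≤ δ := by
    have := Complex.abs_re_le_norm (z - (z₀ : ℂ)) 
    simpa using this
  have him : |z.im| ≤ δ := by
    have := Complex.abs_im_le_norm (z - (z₀ : ℂ))
    simpa using this
  have hre' : |z.re - z₀| ≤ δ := hre
  -- w = z - ζ
  set w : ℂ := z - (ζ : ℂ) with hw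
  have hwre : w.re = z.re - ζ := by simp [hw]
  have hwim : w.im = z.im := by simp [hw]
  -- |w| bounds
  have habs_ge : t - δ ≤ ‖w‖ := by
    have h1 : ζ - z.re ≤ |z.re - ζ| := by rw [abs_sub_comm]; exact le_abs_self _
    have h2 : |z.re - ζ| = |w.re| := by rw [hwre]
    have h3 : |w.re| ≤ ‖w‖ := Complex.abs_re_le_norm w
    have h4 : ζ - z.re ≥ t - δ := by
      have : z.re - z₀ ≤ δ := (abs_le.mp hre).2
      simp only [htdef]; linarith
    linarith
  have habs_le : ‖w‖ ≤ t + δ := by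
    have : w = (z - (z₀ : ℂ)) + ((z₀ : ℂ) - (ζ : ℂ)) := by ring
    rw [this]
    refine (norm_add_le _ _).trans ?_
    have : ‖(z₀ : ℂ) - (ζ : ℂ)‖ = t := by
      rw [← Complex.ofReal_sub, Complex.norm_real, Real.norm_eq_abs, abs_of_neg (by linarith : z₀ - ζ < 0)]
      simp [htdef]
    rw [this]; linarith
  have ht2 : t / 2 ≤ t - δ := by linarith
  have habs_pos : 0 < ‖w‖ := lt_of_lt_of_le (by linarith) habs_ge
  have hwne : w ≠ 0 := by
    intro h; rw [h] at habs_pos; simp at habs_pos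
  -- log part
  have hlog : |Real.log (‖w‖) - Real.log t| ≤ 2 * δ / t := by
    have h1 : Real.log (‖w‖) - Real.log t = Real.log (‖w‖ / t) :=
      (Real.log_div (ne_of_gt habs_pos) (ne_of_gt ht)).symm
    rw [h1, abs_le]
    constructor
    · have h2 : Real.log (t / ‖w‖) ≤ t / ‖w‖ - 1 :=
        Real.log_le_sub_one_of_pos (by positivity)
      have h3 : Real.log (t / ‖w‖) = -Real.log (‖w‖ / t) := by
        rw [Real.log_div (ne_of_gt ht) (ne_of_gt habs_pos),
          Real.log_div (ne_of_gt habs_pos) (ne_of_gt ht)]; ring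
      have h4 : t / ‖w‖ - 1 = (t - ‖w‖) / ‖w‖ := by
        field_simp
      have h5 : (t - ‖w‖) / ‖w‖ ≤ 2 * δ / t := by
        rw [div_le_div_iff₀ habs_pos ht]
        nlinarith
      linarith
    · have h2 : Real.log (‖w‖ / t) ≤ ‖w‖ / t - 1 :=
        Real.log_le_sub_one_of_pos (by positivity)
      have h4 : ‖w‖ / t - 1 = (‖w‖ - t) / t := by field_simp
      have h5 : (‖w‖ - t) / t ≤ 2 * δ / t := by
        rw [div_le_div_iff₀ ht ht]
        nlinarith
      linarith
  -- base value
  have hbase : Gfun ((z₀:ℂ) - (ζ:ℂ)) = (Real.log t : ℂ) + Complex.I * (Real.pi : ℂ) := by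
    have he : ((z₀:ℂ) - (ζ:ℂ)) = ((z₀ - ζ : ℝ) : ℂ) := by push_cast; ring
    rw [he, Gfun_neg_real (by linarith : z₀ - ζ < 0)]
    have : -(z₀ - ζ) = t := by simp [htdef]
    rw [this]
  -- arg part
  set θ : ℝ := if 0 < Complex.arg w then Complex.arg w else Complex.arg w + 2 * Real.pi
    with hθdef
  have hGw : Gfun w = (Real.log (‖w‖) : ℂ) + Complex.I * ((θ : ℝ) : ℂ) := by
    rw [hθdef]; rfl
  have hw' : ((ζ:ℂ) - z) = -w := by rw [hw]; ring
  have hw're : ((ζ:ℂ) - z).re = ζ - z.re := by simp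
  have hw'repos : t / 2 ≤ ((ζ:ℂ) - z).re := by
    rw [hw're]
    have : z.re - z₀ ≤ δ := (abs_le.mp hre).2
    simp only [htdef]; linarith
  have hw'repos' : 0 < ((ζ:ℂ) - z).re := lt_of_lt_of_le (by linarith) hw'repos
  have harg' : |Complex.arg ((ζ:ℂ) - z)| ≤ 2 * δ / t := by
    refine (abs_arg_le hw'repos').trans ?_
    have him' : |((ζ:ℂ) - z).im| ≤ δ := by
      have : ((ζ:ℂ) - z).im = -z.im := by simp
      rw [this, abs_neg]; exact him
    rw [div_le_div_iff₀ hw'repos' ht]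
    nlinarith [abs_nonneg (((ζ:ℂ) - z).im)]
  have harglt : |Complex.arg ((ζ:ℂ) - z)| < 1 := by
    have : 2 * δ / t < 1 := (div_lt_one ht).mpr hd2
    linarith
  have hπ3 : (3:ℝ) < Real.pi := Real.pi_gt_three
  have hθπ : |θ - Real.pi| ≤ 2 * δ / t := by
    rcases lt_trichotomy z.im 0 with hzim | hzim | hzim
    · -- im < 0
      have hargw : Complex.arg ((ζ:ℂ) - z) = Complex.arg w + Real.pi := by
        rw [hw']
        exact Complex.arg_neg_eq_arg_add_pi_of_im_neg (by rw [hwim]; exact hzim)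
      have hneg : ¬ (0 < Complex.arg w) := by
        have h1 := (abs_le.mp harglt.le).2
        rw [hargw] at h1
        intro h; linarith
      rw [hθdef, if_neg hneg]
      have : Complex.arg w + 2 * Real.pi - Real.pi = Complex.arg ((ζ:ℂ) - z) := by
        rw [hargw]; ring
      rw [this]; exact harg'
    · -- im = 0
      have hzre : z.re < z₀ := him0 hzim
      have hargw : Complex.arg w = Real.pi := by
        apply Complex.arg_eq_pi_iff.mpr
        constructor
        · rw [hwre]; linarith
        · rw [hwim]; exact hzim
      rw [hθdef, if_pos (by rw [hargw]; linarith), hargw]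
      simp only [sub_self, abs_zero]
      positivity
    · -- im > 0
      have hargw : Complex.arg ((ζ:ℂ) - z) = Complex.arg w - Real.pi := by
        rw [hw']
        exact Complex.arg_neg_eq_arg_sub_pi_of_im_pos (by rw [hwim]; exact hzim)
      have hpos : 0 < Complex.arg w := by
        have h1 := (abs_le.mp harglt.le).1
        rw [hargw] at h1
        linarith
      rw [hθdef, if_pos hpos]
      have : Complex.arg w - Real.pi = Complex.arg ((ζ:ℂ) - z) := by rw [hargw]
      rw [this]; exact harg'
  -- combine
  have hdiff : Gfun w - Gfun ((z₀:ℂ) - (ζ:ℂ)) =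
      ((Real.log (‖w‖) - Real.log t : ℝ) : ℂ) +
        Complex.I * ((θ - Real.pi : ℝ) : ℂ) := by
    rw [hGw, hbase]; push_cast; ring
  calc ‖Gfun w - Gfun ((z₀:ℂ) - (ζ:ℂ))‖
      ≤ ‖((Real.log (‖w‖) - Real.log t : ℝ) : ℂ)‖ +
        ‖Complex.I * ((θ - Real.pi : ℝ) : ℂ)‖ := by rw [hdiff]; exact norm_add_le _ _
    _ = |Real.log (‖w‖) - Real.log t| + |θ - Real.pi| := by
        rw [Complex.norm_real, norm_mul, Complex.norm_I, one_mul, Complex.norm_real]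
        rfl
    _ ≤ 2 * δ / t + 2 * δ / t := add_le_add hlog hθπ
    _ = 4 * δ / t := by ring

/-- Modulus-of-continuity estimate for the logarithmic Cauchy integral
`χ(z) = (1/(2πi)) ∫_{z₀}^∞ log₀(z-ζ) dg(ζ)` near `z₀`, for nontangential approach to the
contour `[z₀,∞)`. -/
theorem stmt_12 (ν z₀ : ℝ) (g : ℝ → ℝ)
    (hg : ContDiffOn ℝ 1 g (Set.Ici z₀))
    (hg0 : g z₀ = -2 * Real.pi * ν)
    (hint : IntegrableOn (deriv g) (Set.Ioi z₀))
    (hint2 : IntegrableOn (fun ζ : ℝ => Real.log (1 + |ζ|) * |deriv g ζ|) (Set.Ioi z₀))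
    (log0 : ℂ → ℂ)
    (hlog0 : ∀ w : ℂ, w ≠ 0 →
      log0 w = (Real.log (‖w‖) : ℂ) + Complex.I *
        ((if 0 < Complex.arg w then Complex.arg w else Complex.arg w + 2 * Real.pi : ℝ) : ℂ))
    (χ : ℂ → ℂ)
    (hχ : ∀ z : ℂ, χ z = (1 / (2 * (Real.pi : ℂ) * Complex.I)) *
      ∫ ζ in Set.Ioi z₀, log0 (z - (ζ : ℂ)) * (Complex.ofReal (deriv g ζ))) :
    ∀ σ ∈ Set.Ioo (0 : ℝ) 1, ∃ C > (0 : ℝ), ∀ z : ℂ, z ≠ (z₀ : ℂ) →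
      ‖z - (z₀ : ℂ)‖ ≤ 1 →
      σ * ‖z - (z₀ : ℂ)‖ ≤
        Metric.infDist z {w : ℂ | w.im = 0 ∧ z₀ ≤ w.re} →
      ‖χ z - χ (z₀ : ℂ)‖ ≤
        C * ‖z - (z₀ : ℂ)‖ *
          (1 + |Real.log (‖z - (z₀ : ℂ)‖)|) := by
  intro σ hσ
  obtain ⟨hσ0, hσ1⟩ := hσ
  -- bound on deriv g near z₀
  have hcd : ContinuousOn (derivWithin g (Set.Ici z₀)) (Set.Ici z₀) :=
    hg.continuousOn_derivWithin (uniqueDiffOn_Ici z₀) le_rfl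
  obtain ⟨M₀, hM₀⟩ := (isCompact_Icc (a := z₀) (b := z₀ + 2)).exists_bound_of_continuousOn
    (hcd.mono Set.Icc_subset_Ici_self)
  set M := max M₀ 1 with hMdef
  have hM1 : (1 : ℝ) ≤ M := le_max_right _ _
  have hM0 : (0 : ℝ) < M := lt_of_lt_of_le one_pos hM1
  have hM : ∀ ζ ∈ Set.Ioc z₀ (z₀ + 2), |deriv g ζ| ≤ M := by
    intro ζ hζ
    have h1 : deriv g ζ = derivWithin g (Set.Ici z₀) ζ :=
      (derivWithin_of_mem_nhds (Ici_mem_nhds hζ.1)).symm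
    rw [h1, ← Real.norm_eq_abs]
    exact le_trans (hM₀ ζ ⟨hζ.1.le, hζ.2⟩) (le_max_left _ _)
  set I₁ := ∫ ζ in Set.Ioi z₀, |deriv g ζ| with hI₁def
  have hI₁0 : 0 ≤ I₁ :=
    setIntegral_nonneg measurableSet_Ioi (fun ζ _ => abs_nonneg _)
  have hlog2 : (0:ℝ) ≤ Real.log 2 := Real.log_nonneg (by norm_num)
  have hlog3 : (0:ℝ) ≤ Real.log 3 := Real.log_nonneg (by norm_num)
  set c₀ := |Real.log σ| + Real.log 3 + Real.log 2 + 3 * Real.pi with hc₀def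
  have hc₀0 : 0 ≤ c₀ := by positivity
  set C := 10 * M + 2 * M * c₀ + 8 * M + 4 * M * Real.log 2 + 4 * I₁ + 1 with hCdef
  have hC0 : 0 < C := by positivity
  refine ⟨C, hC0, ?_⟩
  intro z hz hδle hσd
  set S : Set ℂ := {w : ℂ | w.im = 0 ∧ z₀ ≤ w.re} with hSdef
  set δ := ‖z - (z₀ : ℂ)‖ with hδdef
  have hδ0 : 0 < δ := by
    rw [hδdef]
    exact norm_pos_iff.mpr (sub_ne_zero.mpr hz)
  set L := |Real.log δ| with hLdef
  have hL0 : 0 ≤ L := abs_nonneg _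
  -- geometric facts
  have hre : |z.re - z₀| ≤ δ := by
    have := Complex.abs_re_le_norm (z - (z₀ : ℂ)); simpa using this
  have hmem : ∀ ζ : ℝ, z₀ ≤ ζ → σ * δ ≤ ‖z - (ζ : ℂ)‖ := by
    intro ζ hζ
    have h1 : (ζ : ℂ) ∈ S := ⟨by simp, by simp [hζ]⟩
    have h2 := Metric.infDist_le_dist_of_mem (x := z) h1
    rw [Complex.dist_eq] at h2
    exact le_trans hσd h2
  have hσδ0 : 0 < σ * δ := by positivity
  have him0 : z.im = 0 → z.re < z₀ := by
    intro h
    by_contra hcon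
    push_neg at hcon
    have hzS : z ∈ S := ⟨h, hcon⟩
    have h0 : Metric.infDist z S = 0 := Metric.infDist_zero_of_mem hzS
    rw [h0] at hσd
    nlinarith
  -- replace log0 by Gfun in the integrals
  have hne1 : ∀ ζ ∈ Set.Ioi z₀, z - (ζ : ℂ) ≠ 0 := by
    intro ζ hζ h0
    have := hmem ζ (le_of_lt hζ)
    rw [h0] at this
    simp only [norm_zero] at this
    nlinarith
  have hne2 : ∀ ζ ∈ Set.Ioi z₀, (z₀ : ℂ) - (ζ : ℂ) ≠ 0 := by
    intro ζ hζ h0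
    have : (z₀ : ℂ) = (ζ : ℂ) := by linear_combination h0
    have : z₀ = ζ := by exact_mod_cast this
    exact absurd this (ne_of_lt hζ)
  have hrw1 : (∫ ζ in Set.Ioi z₀, log0 (z - (ζ : ℂ)) * (Complex.ofReal (deriv g ζ))) =
      ∫ ζ in Set.Ioi z₀, Gfun (z - (ζ : ℂ)) * ((deriv g ζ : ℝ) : ℂ) := by
    refine setIntegral_congr_fun measurableSet_Ioi (fun ζ hζ => ?_)
    rw [hlog0 _ (hne1 ζ hζ)]
    rfl
  have hrw2 : (∫ ζ in Set.Ioi z₀, log0 ((z₀:ℂ) - (ζ : ℂ)) * (Complex.ofReal (deriv g ζ))) =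
      ∫ ζ in Set.Ioi z₀, Gfun ((z₀:ℂ) - (ζ : ℂ)) * ((deriv g ζ : ℝ) : ℂ) := by
    refine setIntegral_congr_fun measurableSet_Ioi (fun ζ hζ => ?_)
    rw [hlog0 _ (hne2 ζ hζ)]
    rfl
  -- measurability
  have hmeas : ∀ y : ℂ, AEStronglyMeasurable
      (fun ζ : ℝ => Gfun (y - (ζ : ℂ)) * ((deriv g ζ : ℝ) : ℂ))
      (volume.restrict (Set.Ioi z₀)) := by
    intro y
    exact ((Gfun_meas.comp (measurable_const.sub Complex.measurable_ofReal)).mul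
      (Complex.measurable_ofReal.comp (measurable_deriv g))).aestronglyMeasurable
  have hnormd : ∀ ζ : ℝ, ‖((deriv g ζ : ℝ) : ℂ)‖ = |deriv g ζ| := by
    intro ζ; rw [Complex.norm_real, Real.norm_eq_abs]
  -- basic abs bounds
  have habs_le : ∀ ζ : ℝ, z₀ < ζ → ‖z - (ζ:ℂ)‖ ≤ δ + (ζ - z₀) := by
    intro ζ hζ
    have he : z - (ζ:ℂ) = (z - (z₀:ℂ)) + ((z₀:ℂ) - (ζ:ℂ)) := by ring
    rw [he]
    refine (norm_add_le _ _).trans ?_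
    have : ‖(z₀:ℂ) - (ζ:ℂ)‖ = ζ - z₀ := by
      rw [← Complex.ofReal_sub, Complex.norm_real, Real.norm_eq_abs, abs_of_neg (by linarith : z₀ - ζ < 0)]
      ring
    rw [this]
  have habs_ge : ∀ ζ : ℝ, z₀ < ζ → (ζ - z₀) - δ ≤ ‖z - (ζ:ℂ)‖ := by
    intro ζ hζ
    have h3 : |(z - (ζ:ℂ)).re| ≤ ‖z - (ζ:ℂ)‖ := Complex.abs_re_le_norm _
    have h4 : (z - (ζ:ℂ)).re = z.re - ζ := by simp
    have h5 : z.re - z₀ ≤ δ := (abs_le.mp hre).2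
    rw [h4] at h3
    calc (ζ - z₀) - δ ≤ ζ - z.re := by linarith
      _ ≤ |z.re - ζ| := by rw [abs_sub_comm]; exact le_abs_self _
      _ ≤ ‖z - (ζ:ℂ)‖ := h3
  -- value of Gfun on the real ray
  have hG2 : ∀ ζ : ℝ, z₀ < ζ →
      Gfun ((z₀:ℂ) - (ζ:ℂ)) = ((Real.log (ζ - z₀) : ℝ) : ℂ) + Complex.I * (Real.pi : ℂ) := by
    intro ζ hζ
    have he : ((z₀:ℂ) - (ζ:ℂ)) = ((z₀ - ζ : ℝ) : ℂ) := by push_cast; ring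
    rw [he, Gfun_neg_real (by linarith : z₀ - ζ < 0)]
    have : -(z₀ - ζ) = ζ - z₀ := by ring
    rw [this]
  have hG2n : ∀ ζ : ℝ, z₀ < ζ →
      ‖Gfun ((z₀:ℂ) - (ζ:ℂ))‖ ≤ |Real.log (ζ - z₀)| + Real.pi := by
    intro ζ hζ
    rw [hG2 ζ hζ]
    refine (norm_add_le _ _).trans ?_
    rw [Complex.norm_real, norm_mul, Complex.norm_I, one_mul, Complex.norm_real,
      Real.norm_eq_abs, Real.norm_eq_abs, abs_of_pos Real.pi_pos]
  -- integrability of the two integrands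
  have hfar_facts : ∀ ζ : ℝ, z₀ + 2 < ζ → (1 ≤ ‖z - (ζ:ℂ)‖ ∧
      ‖z - (ζ:ℂ)‖ ≤ (1 + |ζ|) * (1 + |z₀|)) := by
    intro ζ hζ
    have hζ' : z₀ < ζ := by linarith
    constructor
    · have := habs_ge ζ hζ'; linarith [hδle]
    · have h1 := habs_le ζ hζ'
      have h2 : ζ - z₀ ≤ |ζ| + |z₀| := by
        have := le_abs_self ζ; have := neg_abs_le z₀; linarith
      have h3 : δ + (ζ - z₀) ≤ 1 + |ζ| + |z₀| := by linarith [hδle]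
      nlinarith [abs_nonneg ζ, abs_nonneg z₀]
  have hprod_log : ∀ ζ : ℝ, z₀ + 2 < ζ →
      Real.log ((1 + |ζ|) * (1 + |z₀|)) = Real.log (1 + |ζ|) + Real.log (1 + |z₀|) :=
    fun ζ _ => Real.log_mul (by positivity) (by positivity)
  have hlz₀ : (0:ℝ) ≤ Real.log (1 + |z₀|) := Real.log_nonneg (by simp [abs_nonneg])
  have hf1 : IntegrableOn (fun ζ : ℝ => Gfun (z - (ζ:ℂ)) * ((deriv g ζ : ℝ) : ℂ))
      (Set.Ioi z₀) := by
    set K := |Real.log (σ * δ)| + Real.log 3 + Real.log (1 + |z₀|) + 2 * Real.pi with hKdef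
    have hbint : IntegrableOn
        (fun ζ : ℝ => Real.log (1 + |ζ|) * |deriv g ζ| + K * |deriv g ζ|)
        (Set.Ioi z₀) := hint2.add (hint.abs.const_mul K)
    refine hbint.mono' (hmeas z) ?_
    rw [ae_restrict_iff' measurableSet_Ioi]
    refine Filter.Eventually.of_forall (fun ζ hζ => ?_)
    have hζ' : z₀ < ζ := hζ
    rw [norm_mul, hnormd]
    have hkey : ‖Gfun (z - (ζ:ℂ))‖ ≤ Real.log (1 + |ζ|) + K := by
      refine (Gfun_norm_le _).trans ?_
      have hl1 : (0:ℝ) ≤ Real.log (1 + |ζ|) := Real.log_nonneg (by simp [abs_nonneg])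
      rcases le_or_gt ζ (z₀ + 2) with hc | hc
      · have h1 : ‖z - (ζ:ℂ)‖ ≤ 3 := by
          have := habs_le ζ hζ'; linarith [hδle]
        have h2 := abs_log_le hσδ0 (hmem ζ hζ'.le) h1
        have h3 : |Real.log 3| = Real.log 3 := abs_of_nonneg hlog3
        rw [h3] at h2
        rw [hKdef]; linarith
      · obtain ⟨h1, h2⟩ := hfar_facts ζ hc
        have h4 : (0:ℝ) ≤ Real.log (‖z - (ζ:ℂ)‖) := Real.log_nonneg h1
        have h5 : Real.log (‖z - (ζ:ℂ)‖) ≤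
            Real.log (1 + |ζ|) + Real.log (1 + |z₀|) := by
          rw [← hprod_log ζ hc]
          exact Real.log_le_log (by linarith) h2
        rw [abs_of_nonneg h4, hKdef]
        have := abs_nonneg (Real.log (σ * δ))
        linarith
    calc ‖Gfun (z - (ζ:ℂ))‖ * |deriv g ζ|
        ≤ (Real.log (1 + |ζ|) + K) * |deriv g ζ| :=
          mul_le_mul_of_nonneg_right hkey (abs_nonneg _)
      _ = Real.log (1 + |ζ|) * |deriv g ζ| + K * |deriv g ζ| := by ring
  -- integrability of rpow pieces
  have hrpow_int : ∀ b : ℝ, 0 < b → IntegrableOn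
      (fun ζ : ℝ => (ζ - z₀) ^ (-(1:ℝ)/2)) (Set.Ioc z₀ (z₀ + b)) := by
    intro b hb
    have h1 : IntervalIntegrable (fun x : ℝ => x ^ (-(1:ℝ)/2)) volume 0 b :=
      intervalIntegral.intervalIntegrable_rpow' (by norm_num)
    have h2 := h1.comp_sub_right z₀
    have e1 : (0:ℝ) + z₀ = z₀ := by ring
    have e2 : b + z₀ = z₀ + b := by ring
    rw [e1, e2] at h2
    exact (intervalIntegrable_iff_integrableOn_Ioc_of_le (by linarith)).mp h2
  have hf2 : IntegrableOn (fun ζ : ℝ => Gfun ((z₀:ℂ) - (ζ:ℂ)) * ((deriv g ζ : ℝ) : ℂ))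
      (Set.Ioi z₀) := by
    have hsplit : Set.Ioi z₀ = Set.Ioc z₀ (z₀ + 2) ∪ Set.Ioi (z₀ + 2) :=
      (Set.Ioc_union_Ioi_eq_Ioi (by linarith)).symm
    rw [hsplit]
    refine IntegrableOn.union ?_ ?_
    · -- near piece
      have hbint : IntegrableOn
          (fun ζ : ℝ => M * (|Real.log 2| + Real.pi) +
            (M * (2 * (2:ℝ) ^ ((1:ℝ)/2))) * (ζ - z₀) ^ (-(1:ℝ)/2))
          (Set.Ioc z₀ (z₀ + 2)) := by
        refine Integrable.add ?_ (((hrpow_int 2 (by norm_num))).const_mul _)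
        exact integrableOn_const measure_Ioc_lt_top.ne
      refine hbint.mono' ((hmeas (z₀:ℂ)).mono_set Set.Ioc_subset_Ioi_self) ?_
      rw [ae_restrict_iff' measurableSet_Ioc]
      refine Filter.Eventually.of_forall (fun ζ hζ => ?_)
      obtain ⟨hζ1, hζ2⟩ := hζ
      have ht : 0 < ζ - z₀ := by linarith
      rw [norm_mul, hnormd]
      have hkey := (hG2n ζ hζ1).trans
        (add_le_add_left (abs_log_le_rpow ht (by linarith : ζ - z₀ ≤ 2)) Real.pi)
      have hMζ := hM ζ ⟨hζ1, hζ2⟩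
      have hrp : (0:ℝ) ≤ (ζ - z₀) ^ (-(1:ℝ)/2) := (Real.rpow_pos_of_pos ht _).le
      have hrp2 : (0:ℝ) ≤ (2:ℝ) ^ ((1:ℝ)/2) := (Real.rpow_pos_of_pos two_pos _).le
      calc ‖Gfun ((z₀:ℂ) - (ζ:ℂ))‖ * |deriv g ζ|
          ≤ (|Real.log 2| + 2 * (2:ℝ) ^ ((1:ℝ)/2) * (ζ - z₀) ^ (-(1:ℝ)/2) + Real.pi) * M := by
            refine mul_le_mul hkey hMζ (abs_nonneg _) ?_
            positivity
        _ = M * (|Real.log 2| + Real.pi) +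
            (M * (2 * (2:ℝ) ^ ((1:ℝ)/2))) * (ζ - z₀) ^ (-(1:ℝ)/2) := by ring
    · -- far piece
      have hbint : IntegrableOn
          (fun ζ : ℝ => Real.log (1 + |ζ|) * |deriv g ζ| +
            (Real.log (1 + |z₀|) + Real.pi) * |deriv g ζ|)
          (Set.Ioi (z₀ + 2)) := by
        refine Integrable.add (hint2.mono_set (Set.Ioi_subset_Ioi (by linarith))) ?_
        exact (IntegrableOn.mono_set hint.abs (Set.Ioi_subset_Ioi (by linarith))).const_mul _
      refine hbint.mono' ((hmeas (z₀:ℂ)).mono_set (Set.Ioi_subset_Ioi (by linarith))) ?_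
      rw [ae_restrict_iff' measurableSet_Ioi]
      refine Filter.Eventually.of_forall (fun ζ hζ => ?_)
      have hζ' : z₀ + 2 < ζ := hζ
      have hζ'' : z₀ < ζ := by linarith
      have ht1 : (1:ℝ) ≤ ζ - z₀ := by linarith
      rw [norm_mul, hnormd]
      have h2 : ζ - z₀ ≤ (1 + |ζ|) * (1 + |z₀|) := by
        have h2' : ζ - z₀ ≤ |ζ| + |z₀| := by
          have := le_abs_self ζ; have := neg_abs_le z₀; linarith
        nlinarith [abs_nonneg ζ, abs_nonneg z₀]
      have h4 : |Real.log (ζ - z₀)| = Real.log (ζ - z₀) :=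
        abs_of_nonneg (Real.log_nonneg ht1)
      have h5 : Real.log (ζ - z₀) ≤ Real.log (1 + |ζ|) + Real.log (1 + |z₀|) := by
        rw [← hprod_log ζ hζ']
        exact Real.log_le_log (by linarith) h2
      have hkey := hG2n ζ hζ''
      rw [h4] at hkey
      calc ‖Gfun ((z₀:ℂ) - (ζ:ℂ))‖ * |deriv g ζ|
          ≤ (Real.log (1 + |ζ|) + (Real.log (1 + |z₀|) + Real.pi)) * |deriv g ζ| := by
            refine mul_le_mul_of_nonneg_right ?_ (abs_nonneg _)
            linarith
        _ = Real.log (1 + |ζ|) * |deriv g ζ| +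
            (Real.log (1 + |z₀|) + Real.pi) * |deriv g ζ| := by ring
  -- the difference integrand
  set F : ℝ → ℂ := fun ζ =>
    (Gfun (z - (ζ:ℂ)) - Gfun ((z₀:ℂ) - (ζ:ℂ))) * ((deriv g ζ : ℝ) : ℂ) with hFdef
  have hFeq : ∀ ζ : ℝ, F ζ = Gfun (z - (ζ:ℂ)) * ((deriv g ζ : ℝ):ℂ) -
      Gfun ((z₀:ℂ) - (ζ:ℂ)) * ((deriv g ζ : ℝ):ℂ) := fun ζ => by rw [hFdef]; ring
  have hFint : IntegrableOn F (Set.Ioi z₀) :=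
    (hf1.sub hf2).congr (Filter.Eventually.of_forall fun ζ => (hFeq ζ).symm)
  have hkey : χ z - χ (z₀:ℂ) =
      (1 / (2 * (Real.pi:ℂ) * Complex.I)) * ∫ ζ in Set.Ioi z₀, F ζ := by
    rw [hχ z, hχ (z₀:ℂ), hrw1, hrw2, ← mul_sub]
    congr 1
    rw [← integral_sub hf1 hf2]
    exact integral_congr_ae (Filter.Eventually.of_forall fun ζ => (hFeq ζ).symm)
  -- splitting points
  set m := z₀ + 2 * δ with hmdef
  set m' := max m (z₀ + 1) with hm'def
  have hzm : z₀ ≤ m := by rw [hmdef]; linarith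
  have hmm' : m ≤ m' := le_max_left _ _
  have hm2 : m ≤ z₀ + 2 := by rw [hmdef]; linarith
  have hm'2 : m' ≤ z₀ + 2 := max_le hm2 (by linarith)
  have hsplit1 : (∫ ζ in Set.Ioi z₀, F ζ) =
      (∫ ζ in Set.Ioc z₀ m, F ζ) + ∫ ζ in Set.Ioi m, F ζ := by
    rw [← setIntegral_union (Set.Ioc_disjoint_Ioi le_rfl) measurableSet_Ioi
      (hFint.mono_set Set.Ioc_subset_Ioi_self) (hFint.mono_set (Set.Ioi_subset_Ioi hzm)),
      Set.Ioc_union_Ioi_eq_Ioi hzm]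
  have hsplit2 : (∫ ζ in Set.Ioi m, F ζ) =
      (∫ ζ in Set.Ioc m m', F ζ) + ∫ ζ in Set.Ioi m', F ζ := by
    rw [← setIntegral_union (Set.Ioc_disjoint_Ioi le_rfl) measurableSet_Ioi
      (hFint.mono_set (Set.Ioc_subset_Ioi_self.trans (Set.Ioi_subset_Ioi hzm)))
      (hFint.mono_set (Set.Ioi_subset_Ioi (hzm.trans hmm'))),
      Set.Ioc_union_Ioi_eq_Ioi hmm']
  have htδ : (0:ℝ) < 2*δ := by linarith
  -- near piece
  have hN1 : ‖∫ ζ in Set.Ioc z₀ m, F ζ‖ ≤ 2*δ*M*(3*L + c₀) + 8*M*δ := by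
    set A := M * (3*L + c₀) with hAdef
    set B := M * (2 * (2*δ) ^ ((1:ℝ)/2)) with hBdef
    have hΦint : IntegrableOn (fun ζ : ℝ => A + B * (ζ - z₀) ^ (-(1:ℝ)/2))
        (Set.Ioc z₀ m) := by
      have h1 := (hrpow_int (2*δ) htδ).const_mul B
      have hmm : z₀ + 2*δ = m := hmdef.symm
      rw [hmm] at h1
      exact (integrableOn_const measure_Ioc_lt_top.ne).add h1
    refine (norm_integral_le_of_norm_le hΦint ?_).trans ?_
    · rw [ae_restrict_iff' measurableSet_Ioc]
      refine Filter.Eventually.of_forall (fun ζ hζ => ?_)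
      obtain ⟨hζ1, hζ2⟩ := hζ
      have ht : 0 < ζ - z₀ := by linarith
      have ht2δ : ζ - z₀ ≤ 2*δ := by rw [hmdef] at hζ2; linarith
      have hb1 : ‖Gfun (z - (ζ:ℂ))‖ ≤ 2*L + |Real.log σ| + Real.log 3 + 2*Real.pi := by
        refine (Gfun_norm_le _).trans ?_
        have hup : ‖z - (ζ:ℂ)‖ ≤ 3*δ := by
          have := habs_le ζ hζ1; linarith
        have h2 := abs_log_le hσδ0 (hmem ζ hζ1.le) hup
        have h3 : |Real.log (σ*δ)| ≤ |Real.log σ| + L := by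
          rw [Real.log_mul (ne_of_gt hσ0) (ne_of_gt hδ0)]
          exact abs_add_le _ _
        have h4 : |Real.log (3*δ)| ≤ Real.log 3 + L := by
          rw [Real.log_mul (by norm_num) (ne_of_gt hδ0)]
          refine (abs_add_le _ _).trans ?_
          rw [abs_of_nonneg hlog3]
        linarith
      have hb2 : ‖Gfun ((z₀:ℂ) - (ζ:ℂ))‖ ≤
          L + Real.log 2 + Real.pi + 2 * (2*δ)^((1:ℝ)/2) * (ζ - z₀)^(-(1:ℝ)/2) := by
        refine (hG2n ζ hζ1).trans ?_
        have h2 := abs_log_le_rpow ht ht2δ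
        have h3 : |Real.log (2*δ)| ≤ Real.log 2 + L := by
          rw [Real.log_mul (by norm_num) (ne_of_gt hδ0)]
          refine (abs_add_le _ _).trans ?_
          rw [abs_of_nonneg hlog2]
        linarith
      have hMζ := hM ζ ⟨hζ1, by linarith⟩
      have hrp : (0:ℝ) ≤ (ζ - z₀)^(-(1:ℝ)/2) := (Real.rpow_pos_of_pos ht _).le
      have hrp2 : (0:ℝ) ≤ (2*δ)^((1:ℝ)/2) := (Real.rpow_pos_of_pos htδ _).le
      calc ‖F ζ‖ = ‖Gfun (z - (ζ:ℂ)) - Gfun ((z₀:ℂ) - (ζ:ℂ))‖ * |deriv g ζ| := by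
            rw [hFdef, norm_mul, hnormd]
        _ ≤ ((3*L + c₀) + 2*(2*δ)^((1:ℝ)/2) * (ζ-z₀)^(-(1:ℝ)/2)) * M := by
            refine mul_le_mul ?_ hMζ (abs_nonneg _) (by positivity)
            refine (norm_sub_le _ _).trans ?_
            rw [hc₀def]; linarith
        _ = A + B * (ζ - z₀)^(-(1:ℝ)/2) := by rw [hAdef, hBdef]; ring
    · have hii : IntervalIntegrable (fun ζ : ℝ => (ζ - z₀)^(-(1:ℝ)/2)) volume z₀ m := by
        have h1 : IntervalIntegrable (fun x : ℝ => x ^ (-(1:ℝ)/2)) volume 0 (2*δ) :=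
          intervalIntegral.intervalIntegrable_rpow' (by norm_num)
        have h2 := h1.comp_sub_right z₀
        have e1 : (0:ℝ) + z₀ = z₀ := by ring
        have e2 : 2*δ + z₀ = m := by rw [hmdef]; ring
        rwa [e1, e2] at h2
      have hIoc : (∫ ζ in Set.Ioc z₀ m, (A + B * (ζ - z₀)^(-(1:ℝ)/2))) =
          A * (2*δ) + B * (2 * (2*δ)^((1:ℝ)/2)) := by
        rw [← intervalIntegral.integral_of_le hzm]
        rw [intervalIntegral.integral_add intervalIntegrable_const (hii.const_mul B),
          intervalIntegral.integral_const, intervalIntegral.integral_const_mul]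
        have h3 : (∫ x in z₀..m, (x - z₀)^(-(1:ℝ)/2)) = 2 * (2*δ)^((1:ℝ)/2) := by
          rw [intervalIntegral.integral_comp_sub_right (fun x => x ^ (-(1:ℝ)/2)) z₀]
          have e1 : z₀ - z₀ = (0:ℝ) := by ring
          have e2 : m - z₀ = 2*δ := by rw [hmdef]; ring
          rw [e1, e2, integral_rpow (Or.inl (by norm_num))]
          rw [Real.zero_rpow (by norm_num : (-(1:ℝ)/2 + 1) ≠ 0)]
          norm_num
          ring
        rw [h3]
        have e2 : m - z₀ = 2*δ := by rw [hmdef]; ring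
        rw [e2, smul_eq_mul]
        ring
      rw [hIoc]
      have hsq : (2*δ)^((1:ℝ)/2) * (2*δ)^((1:ℝ)/2) = 2*δ := by
        rw [← Real.rpow_add htδ]; norm_num
      rw [hAdef, hBdef]
      refine le_of_eq ?_
      linear_combination (4*M) * hsq
  -- middle piece
  have hN2 : ‖∫ ζ in Set.Ioc m m', F ζ‖ ≤ 4*δ*M*(Real.log 2 + L) := by
    have hcont : ContinuousOn (fun ζ : ℝ => (4*δ*M) * (ζ - z₀)⁻¹) (Set.Icc m m') := by
      refine continuousOn_const.mul (ContinuousOn.inv₀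
        ((continuous_id.sub continuous_const).continuousOn) ?_)
      intro x hx
      have : m ≤ x := hx.1
      have : z₀ < x := by rw [hmdef] at this; linarith
      exact ne_of_gt (by linarith)
    have hΦint : IntegrableOn (fun ζ : ℝ => (4*δ*M) * (ζ - z₀)⁻¹) (Set.Ioc m m') :=
      (hcont.integrableOn_Icc).mono_set Set.Ioc_subset_Icc_self
    refine (norm_integral_le_of_norm_le hΦint ?_).trans ?_
    · rw [ae_restrict_iff' measurableSet_Ioc]
      refine Filter.Eventually.of_forall (fun ζ hζ => ?_)
      obtain ⟨hζ1, hζ2⟩ := hζ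
      have hd2 : 2 * δ < ζ - z₀ := by rw [hmdef] at hζ1; linarith
      have ht : 0 < ζ - z₀ := by linarith
      have hfar := far_bound z z₀ ζ (by rw [← hδdef]; exact hd2) him0
      have hMζ := hM ζ ⟨by linarith, le_trans hζ2 hm'2⟩
      calc ‖F ζ‖ = ‖Gfun (z - (ζ:ℂ)) - Gfun ((z₀:ℂ) - (ζ:ℂ))‖ * |deriv g ζ| := by
            rw [hFdef, norm_mul, hnormd]
        _ ≤ (4*δ/(ζ-z₀)) * M := by
            refine mul_le_mul ?_ hMζ (abs_nonneg _) (by positivity)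
            rw [hδdef]; exact hfar
        _ = (4*δ*M) * (ζ-z₀)⁻¹ := by rw [div_eq_mul_inv]; ring
    · have hm'pos : 0 < m' - z₀ := by
        have : z₀ + 1 ≤ m' := le_max_right _ _
        linarith
      have hval : (∫ ζ in Set.Ioc m m', (4*δ*M) * (ζ - z₀)⁻¹) =
          (4*δ*M) * (Real.log (m' - z₀) - Real.log (2*δ)) := by
        rw [← intervalIntegral.integral_of_le hmm', intervalIntegral.integral_const_mul]
        congr 1
        rw [intervalIntegral.integral_comp_sub_right (fun x : ℝ => x⁻¹) z₀]
        have e2 : m - z₀ = 2*δ := by rw [hmdef]; ring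
        rw [e2, integral_inv (Set.notMem_uIcc_of_lt htδ hm'pos)]
        rw [Real.log_div (ne_of_gt hm'pos) (by linarith)]
      rw [hval]
      have h1 : Real.log (m' - z₀) ≤ Real.log 2 := by
        refine Real.log_le_log hm'pos ?_
        linarith [hm'2]
      have h2 : -Real.log (2*δ) ≤ -Real.log 2 + L := by
        rw [Real.log_mul (by norm_num) (ne_of_gt hδ0)]
        have := neg_abs_le (Real.log δ)
        rw [hLdef]; linarith
      refine mul_le_mul_of_nonneg_left ?_ (by positivity)
      linarith
  -- far piece
  have hN3 : ‖∫ ζ in Set.Ioi m', F ζ‖ ≤ 4*δ*I₁ := by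
    have hΦint : IntegrableOn (fun ζ : ℝ => (4*δ) * |deriv g ζ|) (Set.Ioi m') :=
      (IntegrableOn.mono_set hint.abs (Set.Ioi_subset_Ioi (hzm.trans hmm'))).const_mul _
    refine (norm_integral_le_of_norm_le hΦint ?_).trans ?_
    · rw [ae_restrict_iff' measurableSet_Ioi]
      refine Filter.Eventually.of_forall (fun ζ hζ => ?_)
      have hζ' : m' < ζ := hζ
      have h1' : z₀ + 1 ≤ m' := le_max_right _ _
      have ht1 : 1 ≤ ζ - z₀ := by linarith
      have hd2 : 2 * δ < ζ - z₀ := by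
        have : m < ζ := lt_of_le_of_lt hmm' hζ'
        rw [hmdef] at this; linarith
      have ht : 0 < ζ - z₀ := by linarith
      have hfar := far_bound z z₀ ζ (by rw [← hδdef]; exact hd2) him0
      have hdd : 4*δ/(ζ-z₀) ≤ 4*δ := by
        rw [div_le_iff₀ ht]
        nlinarith
      calc ‖F ζ‖ = ‖Gfun (z - (ζ:ℂ)) - Gfun ((z₀:ℂ) - (ζ:ℂ))‖ * |deriv g ζ| := by
            rw [hFdef, norm_mul, hnormd]
        _ ≤ (4*δ/(ζ-z₀)) * |deriv g ζ| := by
            refine mul_le_mul_of_nonneg_right ?_ (abs_nonneg _)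
            rw [hδdef]; exact hfar
        _ ≤ (4*δ) * |deriv g ζ| := mul_le_mul_of_nonneg_right hdd (abs_nonneg _)
    · rw [MeasureTheory.integral_const_mul]
      refine mul_le_mul_of_nonneg_left ?_ (by positivity)
      rw [hI₁def]
      exact setIntegral_mono_set hint.abs
        (Filter.Eventually.of_forall fun x => abs_nonneg _)
        ((Set.Ioi_subset_Ioi (hzm.trans hmm')).eventuallyLE)
  -- combine
  have hcnorm : ‖1 / (2 * (Real.pi:ℂ) * Complex.I)‖ = 1/(2*Real.pi) := by
    rw [norm_div, norm_one, norm_mul, norm_mul, Complex.norm_two, Complex.norm_real,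
      Complex.norm_I, Real.norm_eq_abs, abs_of_pos Real.pi_pos, mul_one]
  have hfinal1 : ‖χ z - χ (z₀:ℂ)‖ ≤
      2*δ*M*(3*L+c₀) + 8*M*δ + 4*δ*M*(Real.log 2+L) + 4*δ*I₁ := by
    rw [hkey, norm_mul, hcnorm]
    have hπ : 1/(2*Real.pi) ≤ 1 := by
      rw [div_le_one (by positivity)]
      nlinarith [Real.pi_gt_three]
    have hbig : ‖∫ ζ in Set.Ioi z₀, F ζ‖ ≤
        2*δ*M*(3*L+c₀) + 8*M*δ + 4*δ*M*(Real.log 2+L) + 4*δ*I₁ := by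
      rw [hsplit1, hsplit2]
      refine (norm_add_le _ _).trans ?_
      have h2 := (norm_add_le (∫ ζ in Set.Ioc m m', F ζ) (∫ ζ in Set.Ioi m', F ζ)).trans
        (add_le_add hN2 hN3)
      linarith [hN1]
    calc 1/(2*Real.pi) * ‖∫ ζ in Set.Ioi z₀, F ζ‖
        ≤ 1 * ‖∫ ζ in Set.Ioi z₀, F ζ‖ :=
          mul_le_mul_of_nonneg_right hπ (norm_nonneg _)
      _ = ‖∫ ζ in Set.Ioi z₀, F ζ‖ := one_mul _
      _ ≤ _ := hbig
  have hstuff : 2*M*(3*L+c₀) + 8*M + 4*M*(Real.log 2+L) + 4*I₁ ≤ C*(1+L) := by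
    rw [hCdef]
    nlinarith [mul_nonneg (show (0:ℝ) ≤ 2*M*c₀ + 8*M + 4*M*Real.log 2 + 4*I₁ + 1 by positivity) hL0]
  calc ‖χ z - χ (z₀:ℂ)‖
      ≤ 2*δ*M*(3*L+c₀) + 8*M*δ + 4*δ*M*(Real.log 2+L) + 4*δ*I₁ := hfinal1
    _ = δ * (2*M*(3*L+c₀) + 8*M + 4*M*(Real.log 2+L) + 4*I₁) := by ring
    _ ≤ δ * (C*(1+L)) := mul_le_mul_of_nonneg_left hstuff hδ0.le
    _ = C * δ * (1+L) := by ring
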